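/- The Petersen graph P has circular flow number F_c(P) = 5. -/

import Mathlib

structure Multigraph where
  V : Type
  E : Type
  [finV : Finite V]
  [finE : Finite E]
  fst : E → V
  snd : E → V

attribute [instance] Multigraph.finV Multigraph.finE

namespace Multigraph

/-- The degree of a vertex (loops count twice). -/
noncomputable def degree (G : Multigraph) (v : G.V) : ℕ :=
  Nat.card {e : G.E // G.fst e = v} + Nat.card {e : G.E // G.snd e = v}

def IsRegular (G : Multigraph) (k : ℕ) : Prop := ∀ v, G.degree v = k

/-- `φ` is a nowhere-zero `r`-flow: values have absolute value in `[1, r-1]`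
(the sign of `φ e` encodes the chosen orientation of `e`), and flow is conserved
at every vertex. -/
def IsNowhereZeroFlow (G : Multigraph) (r : ℝ) (φ : G.E → ℝ) : Prop :=
  (∀ e, 1 ≤ |φ e| ∧ |φ e| ≤ r - 1) ∧
  ∀ v : G.V, (∑ᶠ e ∈ {e : G.E | G.fst e = v}, φ e) = ∑ᶠ e ∈ {e : G.E | G.snd e = v}, φ e

def HasNowhereZeroFlow (G : Multigraph) (r : ℝ) : Prop := ∃ φ, G.IsNowhereZeroFlow r φ

/-- The circular flow number, `⊤` if `G` has no nowhere-zero flow. -/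
noncomputable def flowNumber (G : Multigraph) : EReal :=
  sInf {x : EReal | ∃ r : ℝ, x = (r : EReal) ∧ G.HasNowhereZeroFlow r}

def Bipartite (G : Multigraph) : Prop :=
  ∃ c : G.V → Bool, ∀ e, c (G.fst e) ≠ c (G.snd e)

def IsOneFactor (G : Multigraph) (F : Set G.E) : Prop :=
  (∀ e ∈ F, G.fst e ≠ G.snd e) ∧
  ∀ v : G.V, ∃! e : G.E, e ∈ F ∧ (G.fst e = v ∨ G.snd e = v)

/-- `G - F` is bipartite. -/
def BipartiteWithout (G : Multigraph) (F : Set G.E) : Prop :=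
  ∃ c : G.V → Bool, ∀ e ∉ F, c (G.fst e) ≠ c (G.snd e)

def IsProperEdgeColoring (G : Multigraph) {n : ℕ} (c : G.E → Fin n) : Prop :=
  ∀ e₁ e₂ : G.E, e₁ ≠ e₂ →
    (G.fst e₁ = G.fst e₂ ∨ G.fst e₁ = G.snd e₂ ∨ G.snd e₁ = G.fst e₂ ∨ G.snd e₁ = G.snd e₂) →
    c e₁ ≠ c e₂

noncomputable def edgeChromaticNumber (G : Multigraph) : ℕ :=
  sInf {n : ℕ | ∃ c : G.E → Fin n, G.IsProperEdgeColoring c}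

def edgeBoundary (G : Multigraph) (X : Set G.V) : Set G.E :=
  {e | (G.fst e ∈ X) ≠ (G.snd e ∈ X)}

def IsBalancedValuation (G : Multigraph) (w : G.V → ℝ) : Prop :=
  ∀ X : Set G.V, |∑ᶠ v ∈ X, w v| ≤ (G.edgeBoundary X).ncard

end Multigraph

/-- Vertices of the Petersen graph: 2-element subsets of a 5-element set. -/
abbrev PetersenVertex : Type := {s : Finset (Fin 5) // s.card = 2}

/-- The Petersen graph as the Kneser graph `K(5,2)`: two 2-subsets are adjacent
iff they are disjoint. -/
def petersen : SimpleGraph PetersenVertex where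
  Adj a b := Disjoint a.1 b.1
  symm := ⟨fun _ _ h => h.symm⟩
  loopless := ⟨by
    intro a h
    rw [disjoint_self] at h
    have := a.2
    simp [h] at this⟩

/-- The Petersen graph viewed as a multigraph; each edge `e` gets the two ends of
a (fixed) representative of the unordered pair `e`. -/
noncomputable def petersenMultigraph : Multigraph where
  V := PetersenVertex
  E := ↥petersen.edgeSet
  fst e := (Quot.out e.val).1
  snd e := (Quot.out e.val).2


instance : DecidableRel petersen.Adj := fun a b => by unfold petersen; infer_instance

def Wtab : ℕ → ℕ → ℤ
  | 3, 12 => -2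
  | 3, 20 => 4
  | 3, 24 => -2
  | 5, 10 => -4
  | 5, 18 => 1
  | 5, 24 => 3
  | 6, 9 => -1
  | 6, 17 => 2
  | 6, 24 => -1
  | 9, 6 => 1
  | 9, 18 => 2
  | 9, 20 => -3
  | 10, 5 => 4
  | 10, 17 => -3
  | 10, 20 => -1
  | 12, 3 => 2
  | 12, 17 => 1
  | 12, 18 => -3
  | 17, 6 => -2
  | 17, 10 => 3
  | 17, 12 => -1
  | 18, 5 => -1
  | 18, 9 => -2
  | 18, 12 => 3
  | 20, 3 => -4
  | 20, 9 => 3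
  | 20, 10 => 1
  | 24, 3 => 2
  | 24, 5 => -3
  | 24, 6 => 1
  | _, _ => 0

def fZ (a b : PetersenVertex) : ℤ := Wtab (∑ i ∈ a.val, 2 ^ (i : ℕ)) (∑ i ∈ b.val, 2 ^ (i : ℕ))

lemma fZ_bounds : ∀ a b : PetersenVertex, petersen.Adj a b →
    1 ≤ (fZ a b).natAbs ∧ (fZ a b).natAbs ≤ 4 := by decide

lemma fZ_anti : ∀ a b : PetersenVertex, fZ b a = -fZ a b := by decide

/-- the incidence function used for conservation -/
def hZ (v : PetersenVertex) : Sym2 PetersenVertex → ℤ :=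
  Sym2.lift ⟨fun a b => if a = v then fZ v b else if b = v then fZ v a else 0, by
    intro a b
    by_cases ha : a = v <;> by_cases hb : b = v <;> simp [ha, hb]⟩

lemma hZ_sum : ∀ v : PetersenVertex, ∑ p ∈ petersen.edgeSet.toFinset, hZ v p = 0 := by decide

namespace PetersenProof

abbrev PE : Type := ↥petersen.edgeSet

noncomputable def out1 (e : PE) : PetersenVertex := (Quot.out e.val).1
noncomputable def out2 (e : PE) : PetersenVertex := (Quot.out e.val).2

lemma out_mk (e : PE) : s(out1 e, out2 e) = e.val := Quot.out_eq e.val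

lemma out_adj (e : PE) : petersen.Adj (out1 e) (out2 e) := by
  have h := e.prop
  rw [← out_mk e] at h
  exact h

lemma out_ne (e : PE) : out1 e ≠ out2 e := (out_adj e).ne

lemma hfst : petersenMultigraph.fst = out1 := rfl
lemma hsnd : petersenMultigraph.snd = out2 := rfl

noncomputable def φ5 : PE → ℝ := fun e => ((fZ (out1 e) (out2 e) : ℤ) : ℝ)

/-- bridge: finsum over a set of edges = Fintype sum of ite -/
lemma finsum_bridge (φ : PE → ℝ) (P : PE → Prop) [DecidablePred P] :
    (∑ᶠ e ∈ {e : PE | P e}, φ e) = ∑ e : PE, if P e then φ e else 0 := by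
  rw [finsum_mem_eq_finite_toFinset_sum φ (Set.toFinite _), ← Finset.sum_filter]
  apply Finset.sum_congr _ (fun _ _ => rfl)
  ext e
  simp

lemma upper : petersenMultigraph.HasNowhereZeroFlow 5 := by
  classical
  refine ⟨φ5, ⟨?_, ?_⟩⟩
  · intro e
    obtain ⟨h1, h2⟩ := fZ_bounds _ _ (out_adj e)
    have habs : |φ5 e| = ((fZ (out1 e) (out2 e)).natAbs : ℝ) := by
      simp only [φ5]
      rw [Nat.cast_natAbs, Int.cast_abs]
    rw [habs]
    norm_num
    have k := Int.natCast_natAbs (fZ (out1 e) (out2 e))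
    have k1 : (1:ℤ) ≤ ((fZ (out1 e) (out2 e)).natAbs : ℤ) := by exact_mod_cast h1
    have k2 : ((fZ (out1 e) (out2 e)).natAbs : ℤ) ≤ 4 := by exact_mod_cast h2
    have k3 : (1:ℤ) ≤ |fZ (out1 e) (out2 e)| := by linarith
    have k4 : |fZ (out1 e) (out2 e)| ≤ 4 := by linarith
    exact ⟨by exact_mod_cast k3, by exact_mod_cast k4⟩
  · intro v
    show (∑ᶠ e ∈ {e : PE | out1 e = v}, φ5 e) = ∑ᶠ e ∈ {e : PE | out2 e = v}, φ5 e
    rw [finsum_bridge φ5 (fun e => out1 e = v), finsum_bridge φ5 (fun e => out2 e = v)]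
    rw [← sub_eq_zero, ← Finset.sum_sub_distrib]
    have key : ∀ e : PE, ((if out1 e = v then φ5 e else 0) - (if out2 e = v then φ5 e else 0))
        = ((hZ v e.val : ℤ) : ℝ) := by
      intro e
      rw [← out_mk e]
      show _ = ((Sym2.lift _ s(out1 e, out2 e) : ℤ) : ℝ)
      rw [Sym2.lift_mk]
      by_cases h1 : out1 e = v
      · have h2 : ¬ out2 e = v := fun h => out_ne e (h1.trans h.symm)
        simp only [h1, h2, if_true, if_false, if_neg h2]
        rw [sub_zero, φ5, h1]
        simp
      · by_cases h2 : out2 e = v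
        · simp only [h1, h2, if_false, if_true]
          rw [zero_sub, φ5, h2]
          have := fZ_anti v (out1 e)
          simp [this]
          split_ifs <;> simp
        · simp [h1, h2]
    rw [Finset.sum_congr rfl (fun e _ => key e)]
    rw [← Int.cast_sum]
    have : ∑ e : PE, hZ v e.val = ∑ p ∈ petersen.edgeSet.toFinset, hZ v p := by
      exact Finset.sum_set_coe (f := fun p => hZ v p) petersen.edgeSet
    rw [this]
    exact_mod_cast hZ_sum v

end PetersenProof

namespace PetersenProof

open Finset

def pv (a b : Fin 5) (h : ({a,b} : Finset (Fin 5)).card = 2 := by decide) : PetersenVertex := ⟨{a,b}, h⟩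

def V0 : PetersenVertex := pv 0 1
def V1 : PetersenVertex := pv 0 2
def V2 : PetersenVertex := pv 0 3
def V3 : PetersenVertex := pv 0 4
def V4 : PetersenVertex := pv 1 2
def V5 : PetersenVertex := pv 1 3
def V6 : PetersenVertex := pv 1 4
def V7 : PetersenVertex := pv 2 3
def V8 : PetersenVertex := pv 2 4
def V9 : PetersenVertex := pv 3 4

def mkc (b0 b1 b2 b3 b4 b5 b6 b7 b8 b9 : Bool) : PetersenVertex → Bool := fun x =>
  if x = V0 then b0 else if x = V1 then b1 else if x = V2 then b2 else if x = V3 then b3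
  else if x = V4 then b4 else if x = V5 then b5 else if x = V6 then b6 else if x = V7 then b7
  else if x = V8 then b8 else b9

set_option maxHeartbeats 8000000 in
set_option maxRecDepth 100000 in
lemma monoP3_aux : ∀ b0 b1 b2 b3 b4 b5 b6 b7 b8 b9 : Bool,
    (Finset.univ.filter (fun a => mkc b0 b1 b2 b3 b4 b5 b6 b7 b8 b9 a = true)).card = 5 →
    ∃ v u w : PetersenVertex, petersen.Adj v u ∧ petersen.Adj v w ∧ ¬petersen.Adj u w ∧
      u ≠ w ∧ mkc b0 b1 b2 b3 b4 b5 b6 b7 b8 b9 u = mkc b0 b1 b2 b3 b4 b5 b6 b7 b8 b9 v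
      ∧ mkc b0 b1 b2 b3 b4 b5 b6 b7 b8 b9 w = mkc b0 b1 b2 b3 b4 b5 b6 b7 b8 b9 v := by decide

lemma vertex_list : ∀ x : PetersenVertex,
    x = V0 ∨ x = V1 ∨ x = V2 ∨ x = V3 ∨ x = V4 ∨ x = V5 ∨ x = V6 ∨ x = V7 ∨ x = V8 ∨ x = V9 := by
  decide

lemma mkc_eval : ∀ b0 b1 b2 b3 b4 b5 b6 b7 b8 b9 : Bool,
    mkc b0 b1 b2 b3 b4 b5 b6 b7 b8 b9 V0 = b0 ∧ mkc b0 b1 b2 b3 b4 b5 b6 b7 b8 b9 V1 = b1 ∧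
    mkc b0 b1 b2 b3 b4 b5 b6 b7 b8 b9 V2 = b2 ∧ mkc b0 b1 b2 b3 b4 b5 b6 b7 b8 b9 V3 = b3 ∧
    mkc b0 b1 b2 b3 b4 b5 b6 b7 b8 b9 V4 = b4 ∧ mkc b0 b1 b2 b3 b4 b5 b6 b7 b8 b9 V5 = b5 ∧
    mkc b0 b1 b2 b3 b4 b5 b6 b7 b8 b9 V6 = b6 ∧ mkc b0 b1 b2 b3 b4 b5 b6 b7 b8 b9 V7 = b7 ∧
    mkc b0 b1 b2 b3 b4 b5 b6 b7 b8 b9 V8 = b8 ∧ mkc b0 b1 b2 b3 b4 b5 b6 b7 b8 b9 V9 = b9 := by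
  decide

lemma monoP3 (c : PetersenVertex → Bool)
    (hc : (Finset.univ.filter (fun a => c a = true)).card = 5) :
    ∃ v u w : PetersenVertex, petersen.Adj v u ∧ petersen.Adj v w ∧ ¬petersen.Adj u w ∧
      u ≠ w ∧ c u = c v ∧ c w = c v := by
  have hcc : c = mkc (c V0) (c V1) (c V2) (c V3) (c V4) (c V5) (c V6) (c V7) (c V8) (c V9) := by
    funext x
    obtain h := mkc_eval (c V0) (c V1) (c V2) (c V3) (c V4) (c V5) (c V6) (c V7) (c V8) (c V9)
    rcases vertex_list x with rfl|rfl|rfl|rfl|rfl|rfl|rfl|rfl|rfl|rfl <;> tauto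
  rw [hcc] at hc ⊢
  exact monoP3_aux _ _ _ _ _ _ _ _ _ _ hc

lemma deg3 : ∀ a : PetersenVertex, (Finset.univ.filter (fun b => petersen.Adj a b)).card = 3 := by
  decide

lemma exists_adj : ∀ a : PetersenVertex, ∃ b, petersen.Adj a b := by decide

lemma card_univ_10 : (Finset.univ : Finset PetersenVertex).card = 10 := by decide

open scoped Classical in
noncomputable def Oset (g : PetersenVertex → PetersenVertex → ℝ) (a : PetersenVertex) :
    Finset PetersenVertex := Finset.univ.filter (fun b => 0 < g a b)

open scoped Classical in
noncomputable def Iset (g : PetersenVertex → PetersenVertex → ℝ) (a : PetersenVertex) :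
    Finset PetersenVertex := Finset.univ.filter (fun b => g a b < 0)

lemma mem_Oset {g : PetersenVertex → PetersenVertex → ℝ} {a b : PetersenVertex} :
    b ∈ Oset g a ↔ 0 < g a b := by simp [Oset]

lemma mem_Iset {g : PetersenVertex → PetersenVertex → ℝ} {a b : PetersenVertex} :
    b ∈ Iset g a ↔ g a b < 0 := by simp [Iset]

section Core

variable (r : ℝ) (g : PetersenVertex → PetersenVertex → ℝ)
variable (hsupp : ∀ a b, ¬petersen.Adj a b → g a b = 0)
variable (hbd : ∀ a b, petersen.Adj a b → 1 ≤ |g a b| ∧ |g a b| ≤ r - 1)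
variable (hrow : ∀ a, ∑ b : PetersenVertex, g a b = 0)

include hbd in
lemma htri : ∀ a b, petersen.Adj a b → g a b < 0 ∨ 0 < g a b := by
  intro a b hab
  rcases lt_trichotomy (g a b) 0 with h|h|h
  · exact Or.inl h
  · exfalso
    have h1 := (hbd a b hab).1
    rw [h] at h1
    norm_num at h1
  · exact Or.inr h

include hsupp hbd in
lemma OIcard : ∀ a, (Oset g a).card + (Iset g a).card = 3 := by
  intro a
  have hunion : Oset g a ∪ Iset g a = Finset.univ.filter (fun b => petersen.Adj a b) := by
    ext b
    simp only [Finset.mem_union, mem_Oset, mem_Iset, Finset.mem_filter, Finset.mem_univ, true_and]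
    constructor
    · rintro (h|h) <;> (by_contra hadj; rw [hsupp a b hadj] at h; exact lt_irrefl 0 h)
    · intro hadj
      rcases htri r g hbd a b hadj with h|h
      · exact Or.inr h
      · exact Or.inl h
  have hdisj : Disjoint (Oset g a) (Iset g a) := by
    rw [Finset.disjoint_left]
    intro b hbO hbI
    rw [mem_Oset] at hbO
    rw [mem_Iset] at hbI
    linarith
  rw [← Finset.card_union_of_disjoint hdisj, hunion, deg3]

include hbd hrow in
lemma Oset_nonempty : ∀ a, (Oset g a).Nonempty := by
  intro a
  by_contra h
  rw [Finset.not_nonempty_iff_eq_empty] at h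
  have hall : ∀ b ∈ Finset.univ, g a b ≤ 0 := by
    intro b _
    by_contra hb
    push_neg at hb
    have : b ∈ Oset g a := mem_Oset.mpr hb
    rw [h] at this
    exact absurd this (Finset.notMem_empty b)
  have hz := (Finset.sum_eq_zero_iff_of_nonpos hall).mp (hrow a)
  obtain ⟨b0, hb0⟩ := exists_adj a
  have h1 := (hbd a b0 hb0).1
  rw [hz b0 (Finset.mem_univ b0)] at h1
  norm_num at h1

include hbd hrow in
lemma Iset_nonempty : ∀ a, (Iset g a).Nonempty := by
  intro a
  by_contra h
  rw [Finset.not_nonempty_iff_eq_empty] at h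
  have hall : ∀ b ∈ Finset.univ, 0 ≤ g a b := by
    intro b _
    by_contra hb
    push_neg at hb
    have : b ∈ Iset g a := mem_Iset.mpr hb
    rw [h] at this
    exact absurd this (Finset.notMem_empty b)
  have hz := (Finset.sum_eq_zero_iff_of_nonneg hall).mp (hrow a)
  obtain ⟨b0, hb0⟩ := exists_adj a
  have h1 := (hbd a b0 hb0).1
  rw [hz b0 (Finset.mem_univ b0)] at h1
  norm_num at h1

include hsupp hbd hrow in
lemma Ocard12 : ∀ a, (Oset g a).card = 1 ∨ (Oset g a).card = 2 := by
  intro a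
  have h3 := OIcard r g hsupp hbd a
  have h1 := Finset.card_pos.mpr (Oset_nonempty r g hbd hrow a)
  have h2 := Finset.card_pos.mpr (Iset_nonempty r g hbd hrow a)
  omega

end Core

section Core2

variable (r : ℝ) (g : PetersenVertex → PetersenVertex → ℝ)
variable (hanti : ∀ a b, g b a = -g a b)
variable (hsupp : ∀ a b, ¬petersen.Adj a b → g a b = 0)
variable (hbd : ∀ a b, petersen.Adj a b → 1 ≤ |g a b| ∧ |g a b| ≤ r - 1)
variable (hrow : ∀ a, ∑ b : PetersenVertex, g a b = 0)

include hanti hsupp hbd hrow in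
lemma Ocard_sum : (Finset.univ.filter (fun a => (Oset g a).card = 2)).card = 5 := by
  classical
  have h1 : ∑ a : PetersenVertex, (Oset g a).card = ∑ a : PetersenVertex, (Iset g a).card := by
    simp only [Oset, Iset, Finset.card_filter]
    rw [Finset.sum_comm]
    apply Finset.sum_congr rfl
    intro a _
    apply Finset.sum_congr rfl
    intro b _
    refine if_congr ?_ rfl rfl
    rw [hanti a b]
    exact neg_pos
  have h2 : ∑ a : PetersenVertex, ((Oset g a).card + (Iset g a).card) = 30 := by
    rw [Finset.sum_congr rfl (fun a _ => OIcard r g hsupp hbd a), Finset.sum_const, card_univ_10]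
    rfl
  rw [Finset.sum_add_distrib] at h2
  have h3 : ∑ a : PetersenVertex, (Oset g a).card = 15 := by omega
  have h4 := Finset.sum_filter_add_sum_filter_not Finset.univ
    (fun a => (Oset g a).card = 2) (fun a => (Oset g a).card)
  have h5 : ∑ a ∈ Finset.univ.filter (fun a => (Oset g a).card = 2), (Oset g a).card
      = 2 * (Finset.univ.filter (fun a => (Oset g a).card = 2)).card := by
    rw [Finset.sum_congr rfl (fun a ha => (Finset.mem_filter.mp ha).2), Finset.sum_const]
    ring
  have h6 : ∑ a ∈ Finset.univ.filter (fun a => ¬(Oset g a).card = 2), (Oset g a).card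
      = (Finset.univ.filter (fun a => ¬(Oset g a).card = 2)).card := by
    rw [Finset.sum_congr rfl (fun a ha => ?_), Finset.sum_const, smul_eq_mul, mul_one]
    have h7 := (Finset.mem_filter.mp ha).2
    rcases Ocard12 r g hsupp hbd hrow a with h|h
    · exact h
    · exact absurd h h7
  have h8 := Finset.card_filter_add_card_filter_not (s := (Finset.univ : Finset PetersenVertex))
    (p := fun a => (Oset g a).card = 2)
  rw [card_univ_10] at h8
  omega

variable (v u w : PetersenVertex)
variable (hvu : petersen.Adj v u) (hvw : petersen.Adj v w)
variable (hnuw : ¬petersen.Adj u w) (huw : u ≠ w)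

include hsupp in
lemma Oset_subset_tri : ∀ (x a b c' : PetersenVertex),
    (∀ t, petersen.Adj x t → t = a ∨ t = b ∨ t = c') → Oset g x ⊆ {a, b, c'} := by
  intro x a b c' hN t ht
  rw [mem_Oset] at ht
  have hadj : petersen.Adj x t := by
    by_contra h
    rw [hsupp x t h] at ht
    exact lt_irrefl 0 ht
  rcases hN t hadj with rfl|rfl|rfl <;> simp

include hsupp in
lemma hpos2 : ∀ (x a b c' : PetersenVertex),
    (∀ t, petersen.Adj x t → t = a ∨ t = b ∨ t = c') → b ≠ c' → (Oset g x).card = 2 →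
    g x a < 0 → 0 < g x b ∧ 0 < g x c' := by
  intro x a b c' hN hbc h2 hna
  have hsub : Oset g x ⊆ {b, c'} := by
    intro t ht
    have htm := Oset_subset_tri g hsupp x a b c' hN ht
    have hta : t ≠ a := by
      rintro rfl
      rw [mem_Oset] at ht
      linarith
    simp only [Finset.mem_insert, Finset.mem_singleton] at htm ⊢
    tauto
  have hcards : ({b, c'} : Finset PetersenVertex).card ≤ (Oset g x).card := by
    rw [Finset.card_insert_of_notMem (by simp [hbc]), Finset.card_singleton, h2]
  have heq : Oset g x = {b, c'} := Finset.eq_of_subset_of_card_le hsub hcards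
  constructor
  · exact mem_Oset.mp (heq ▸ (Finset.mem_insert_self b {c'}))
  · exact mem_Oset.mp (heq ▸ (by simp : c' ∈ ({b, c'} : Finset PetersenVertex)))

include hbd in
set_option linter.unusedSectionVars false in
lemma hneg3 : ∀ (x a b c' : PetersenVertex),
    (∀ t, petersen.Adj x t → t = a ∨ t = b ∨ t = c') → a ≠ b → a ≠ c' → b ≠ c' →
    petersen.Adj x c' → (Oset g x).card = 2 →
    0 < g x a → 0 < g x b → g x c' < 0 := by
  intro x a b c' hN hab hac hbc hadj h2 hpa hpb
  rcases htri r g hbd x c' hadj with h|h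
  · exact h
  · exfalso
    have hsub : ({a, b, c'} : Finset PetersenVertex) ⊆ Oset g x := by
      intro t ht
      simp only [Finset.mem_insert, Finset.mem_singleton] at ht
      rcases ht with rfl|rfl|rfl <;> rw [mem_Oset] <;> assumption
    have h3 : ({a, b, c'} : Finset PetersenVertex).card = 3 := by
      rw [Finset.card_insert_of_notMem (by simp [hab, hac]),
        Finset.card_insert_of_notMem (by simp [hbc]), Finset.card_singleton]
    have := Finset.card_le_card hsub
    omega

end Core2

set_option linter.unusedSectionVars false in
set_option maxHeartbeats 1600000 in
lemma inner_lemma (r : ℝ) (g : PetersenVertex → PetersenVertex → ℝ)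
    (hanti : ∀ a b, g b a = -g a b)
    (hsupp : ∀ a b, ¬petersen.Adj a b → g a b = 0)
    (hbd : ∀ a b, petersen.Adj a b → 1 ≤ |g a b| ∧ |g a b| ≤ r - 1)
    (hrow : ∀ a, ∑ b : PetersenVertex, g a b = 0)
    (v u w : PetersenVertex)
    (hvu : petersen.Adj v u) (hvw : petersen.Adj v w)
    (hnuw : ¬petersen.Adj u w) (huw : u ≠ w)
    (h2u : (Oset g u).card = 2) (h2v : (Oset g v).card = 2) (h2w : (Oset g w).card = 2) :
    5 ≤ r := by
  classical
  have hge1 : ∀ a b, petersen.Adj a b → 0 < g a b → 1 ≤ g a b := by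
    intro a b hab h
    have h1 := (hbd a b hab).1
    rwa [abs_of_pos h] at h1
  have hler : ∀ a b, petersen.Adj a b → g a b < 0 → -(r-1) ≤ g a b := by
    intro a b hab h
    have h1 := (hbd a b hab).2
    rw [abs_of_neg h] at h1
    linarith
  -- neighbors of u
  have huv : petersen.Adj u v := hvu.symm
  have hmem_uv : v ∈ Finset.univ.filter (fun b => petersen.Adj u b) := by
    simp [huv]
  have hFu : ((Finset.univ.filter (fun b => petersen.Adj u b)).erase v).card = 2 := by
    rw [Finset.card_erase_of_mem hmem_uv, deg3]
  obtain ⟨p, q, hpq, hFupq⟩ := Finset.card_eq_two.mp hFu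
  have hpmem : p ∈ (Finset.univ.filter (fun b => petersen.Adj u b)).erase v := by
    rw [hFupq]; simp
  have hqmem : q ∈ (Finset.univ.filter (fun b => petersen.Adj u b)).erase v := by
    rw [hFupq]; simp
  have hup : petersen.Adj u p := (Finset.mem_filter.mp (Finset.mem_of_mem_erase hpmem)).2
  have huq : petersen.Adj u q := (Finset.mem_filter.mp (Finset.mem_of_mem_erase hqmem)).2
  have hpv : p ≠ v := Finset.ne_of_mem_erase hpmem
  have hqv : q ≠ v := Finset.ne_of_mem_erase hqmem
  have hpw : p ≠ w := fun h => hnuw (h ▸ hup)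
  have hqw : q ≠ w := fun h => hnuw (h ▸ huq)
  have hNu : ∀ t, petersen.Adj u t → t = v ∨ t = p ∨ t = q := by
    intro t ht
    have htm : t ∈ Finset.univ.filter (fun b => petersen.Adj u b) := by simp [ht]
    rw [← Finset.insert_erase hmem_uv, hFupq] at htm
    simpa using htm
  -- neighbors of w
  have hwv : petersen.Adj w v := hvw.symm
  have hmem_wv : v ∈ Finset.univ.filter (fun b => petersen.Adj w b) := by
    simp [hwv]
  have hFw : ((Finset.univ.filter (fun b => petersen.Adj w b)).erase v).card = 2 := by
    rw [Finset.card_erase_of_mem hmem_wv, deg3]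
  obtain ⟨y, z, hyz, hFwyz⟩ := Finset.card_eq_two.mp hFw
  have hymem : y ∈ (Finset.univ.filter (fun b => petersen.Adj w b)).erase v := by
    rw [hFwyz]; simp
  have hzmem : z ∈ (Finset.univ.filter (fun b => petersen.Adj w b)).erase v := by
    rw [hFwyz]; simp
  have hwy : petersen.Adj w y := (Finset.mem_filter.mp (Finset.mem_of_mem_erase hymem)).2
  have hwz : petersen.Adj w z := (Finset.mem_filter.mp (Finset.mem_of_mem_erase hzmem)).2
  have hyv : y ≠ v := Finset.ne_of_mem_erase hymem
  have hzv : z ≠ v := Finset.ne_of_mem_erase hzmem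
  have hNw : ∀ t, petersen.Adj w t → t = v ∨ t = y ∨ t = z := by
    intro t ht
    have htm : t ∈ Finset.univ.filter (fun b => petersen.Adj w b) := by simp [ht]
    rw [← Finset.insert_erase hmem_wv, hFwyz] at htm
    simpa using htm
  -- neighbors of v
  have hmem_vu : u ∈ Finset.univ.filter (fun b => petersen.Adj v b) := by simp [hvu]
  have hmem_vw' : w ∈ (Finset.univ.filter (fun b => petersen.Adj v b)).erase u := by
    rw [Finset.mem_erase]
    exact ⟨(huw.symm : w ≠ u), by simp [hvw]⟩
  have hGv : (((Finset.univ.filter (fun b => petersen.Adj v b)).erase u).erase w).card = 1 := by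
    rw [Finset.card_erase_of_mem hmem_vw', Finset.card_erase_of_mem hmem_vu, deg3]
  obtain ⟨m, hGm⟩ := Finset.card_eq_one.mp hGv
  have hmmem : m ∈ ((Finset.univ.filter (fun b => petersen.Adj v b)).erase u).erase w := by
    rw [hGm]; simp
  have hmw : m ≠ w := Finset.ne_of_mem_erase hmmem
  have hmu : m ≠ u := Finset.ne_of_mem_erase (Finset.mem_of_mem_erase hmmem)
  have hvm : petersen.Adj v m :=
    (Finset.mem_filter.mp (Finset.mem_of_mem_erase (Finset.mem_of_mem_erase hmmem))).2
  have hNv : ∀ t, petersen.Adj v t → t = u ∨ t = w ∨ t = m := by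
    intro t ht
    have htm : t ∈ Finset.univ.filter (fun b => petersen.Adj v b) := by simp [ht]
    rw [← Finset.insert_erase hmem_vu, ← Finset.insert_erase hmem_vw', hGm] at htm
    simpa using htm
  -- distinctness extras
  have hvp : v ≠ p := hpv.symm
  have hvq : v ≠ q := hqv.symm
  have hvy : v ≠ y := hyv.symm
  have hvz : v ≠ z := hzv.symm
  have huv_ne : u ≠ v := huv.ne
  have hwv_ne : w ≠ v := hwv.ne
  have hum : u ≠ m := hmu.symm
  have hwm : w ≠ m := hmw.symm
  -- row equations
  have hrow3 : ∀ (x a b c' : PetersenVertex), (∀ t, petersen.Adj x t → t = a ∨ t = b ∨ t = c') →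
      a ≠ b → a ≠ c' → b ≠ c' → g x a + g x b + g x c' = 0 := by
    intro x a b c' hN hab hac hbc
    have h0 : ∀ t ∈ Finset.univ, t ∉ ({a, b, c'} : Finset PetersenVertex) → g x t = 0 := by
      intro t _ ht
      apply hsupp
      intro hadj
      apply ht
      rcases hN t hadj with rfl|rfl|rfl <;> simp
    have hs := Finset.sum_subset (Finset.subset_univ ({a, b, c'} : Finset PetersenVertex)) h0
    rw [hrow x] at hs
    rw [Finset.sum_insert (by simp [hab, hac]), Finset.sum_insert (by simp [hbc]),
      Finset.sum_singleton] at hs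
    linarith
  have hrow_u : g u v + g u p + g u q = 0 := hrow3 u v p q hNu hvp hvq hpq
  have hrow_v : g v u + g v w + g v m = 0 := hrow3 v u w m hNv huw hum hwm
  have hrow_w : g w v + g w y + g w z = 0 := hrow3 w v y z hNw hvy hvz hyz
  have hSeq : g u p + g u q + g v m + g w y + g w z = 0 := by
    have h1 := hanti u v
    have h2 := hanti v w
    linarith
  -- case analysis on sign of g v u
  rcases htri r g hbd v u hvu with hneg | hpos
  · -- g v u < 0
    obtain ⟨hgvw, hgvm⟩ := hpos2 g hsupp v u w m hNv hwm h2v hneg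
    have huv_pos : 0 < g u v := by have := hanti v u; linarith
    have hwv_neg : g w v < 0 := by have := hanti v w; linarith
    obtain ⟨hgy, hgz⟩ := hpos2 g hsupp w v y z hNw hyz h2w hwv_neg
    rcases htri r g hbd u p hup with hp | hp
    · obtain ⟨_, hgq⟩ := hpos2 g hsupp u p v q
        (fun t ht => by rcases hNu t ht with h|h|h <;> tauto) hvq h2u hp
      linarith [hge1 u q huq hgq, hge1 v m hvm hgvm, hge1 w y hwy hgy, hge1 w z hwz hgz,
        hler u p hup hp]
    · have hq := hneg3 r g hbd u v p q hNu hvp hvq hpq huq h2u huv_pos hp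
      linarith [hge1 u p hup hp, hge1 v m hvm hgvm, hge1 w y hwy hgy, hge1 w z hwz hgz,
        hler u q huq hq]
  · -- 0 < g v u
    have huv_neg : g u v < 0 := by have := hanti v u; linarith
    obtain ⟨hgp, hgq⟩ := hpos2 g hsupp u v p q hNu hpq h2u huv_neg
    rcases htri r g hbd v w hvw with hvw_neg | hvw_pos
    · -- g v w < 0
      obtain ⟨_, hgvm⟩ := hpos2 g hsupp v w u m
        (fun t ht => by rcases hNv t ht with h|h|h <;> tauto) hum h2v hvw_neg
      have hwv_pos : 0 < g w v := by have := hanti v w; linarith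
      rcases htri r g hbd w y hwy with hy | hy
      · obtain ⟨_, hgz⟩ := hpos2 g hsupp w y v z
          (fun t ht => by rcases hNw t ht with h|h|h <;> tauto) hvz h2w hy
        linarith [hge1 u p hup hgp, hge1 u q huq hgq, hge1 v m hvm hgvm, hge1 w z hwz hgz,
          hler w y hwy hy]
      · have hz := hneg3 r g hbd w v y z hNw hvy hvz hyz hwz h2w hwv_pos hy
        linarith [hge1 u p hup hgp, hge1 u q huq hgq, hge1 v m hvm hgvm, hge1 w y hwy hy,
          hler w z hwz hz]
    · -- 0 < g v w
      have hgvm := hneg3 r g hbd v u w m hNv huw hum hwm hvm h2v hpos hvw_pos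
      have hwv_neg : g w v < 0 := by have := hanti v w; linarith
      obtain ⟨hgy, hgz⟩ := hpos2 g hsupp w v y z hNw hyz h2w hwv_neg
      linarith [hge1 u p hup hgp, hge1 u q huq hgq, hge1 w y hwy hgy, hge1 w z hwz hgz,
        hler v m hvm hgvm]

lemma core_lemma (r : ℝ) (g : PetersenVertex → PetersenVertex → ℝ)
    (hanti : ∀ a b, g b a = -g a b)
    (hsupp : ∀ a b, ¬petersen.Adj a b → g a b = 0)
    (hbd : ∀ a b, petersen.Adj a b → 1 ≤ |g a b| ∧ |g a b| ≤ r - 1)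
    (hrow : ∀ a, ∑ b : PetersenVertex, g a b = 0) : 5 ≤ r := by
  classical
  set c : PetersenVertex → Bool := fun a => decide ((Oset g a).card = 2) with hc
  have hfilter : Finset.univ.filter (fun a => c a = true)
      = Finset.univ.filter (fun a => (Oset g a).card = 2) := by
    apply Finset.filter_congr
    intro a _
    simp [hc]
  obtain ⟨v', u', w', hvu, hvw, hnuw, huw, hcu, hcw⟩ := monoP3 c
    (by rw [hfilter]; exact Ocard_sum r g hanti hsupp hbd hrow)
  by_cases hcv : c v' = true
  · have h2v : (Oset g v').card = 2 := by simpa [hc] using hcv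
    have h2u : (Oset g u').card = 2 := by simpa [hc] using hcu.trans hcv
    have h2w : (Oset g w').card = 2 := by simpa [hc] using hcw.trans hcv
    exact inner_lemma r g hanti hsupp hbd hrow v' u' w' hvu hvw hnuw huw h2u h2v h2w
  · have h1 : ∀ x, c x = false → (Oset g x).card = 1 := by
      intro x hx
      have : ¬ (Oset g x).card = 2 := by simpa [hc] using hx
      rcases Ocard12 r g hsupp hbd hrow x with h|h
      · exact h
      · exact absurd h this
    rw [Bool.not_eq_true] at hcv
    have h1v := h1 v' hcv
    have h1u := h1 u' (hcu.trans hcv)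
    have h1w := h1 w' (hcw.trans hcv)
    -- apply inner lemma to -g
    have hOI : ∀ x, Oset (fun a b => -g a b) x = Iset g x := by
      intro x
      ext t
      simp [Oset, Iset, neg_pos]
    have h2 : ∀ x, (Oset g x).card = 1 → (Oset (fun a b => -g a b) x).card = 2 := by
      intro x hx
      rw [hOI x]
      have := OIcard r g hsupp hbd x
      omega
    refine inner_lemma r (fun a b => -g a b) ?_ ?_ ?_ ?_ v' u' w' hvu hvw hnuw huw
      (h2 u' h1u) (h2 v' h1v) (h2 w' h1w)
    · intro a b
      show -g b a = -(-g a b)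
      rw [hanti a b]
    · intro a b hab
      show -g a b = 0
      rw [hsupp a b hab]
      ring
    · intro a b hab
      show 1 ≤ |(-g a b)| ∧ |(-g a b)| ≤ r - 1
      rw [abs_neg]
      exact hbd a b hab
    · intro a
      show ∑ b : PetersenVertex, -g a b = 0
      rw [Finset.sum_neg_distrib, hrow a, neg_zero]

noncomputable def Sfun (φ : PE → ℝ) (a b : PetersenVertex) : ℝ :=
  ∑ e : PE, if out1 e = a ∧ out2 e = b then φ e else 0

lemma lower_bound (r : ℝ) (φ : petersenMultigraph.E → ℝ)
    (h : petersenMultigraph.IsNowhereZeroFlow r φ) : 5 ≤ r := by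
  classical
  obtain ⟨hb, hc⟩ := h
  set g : PetersenVertex → PetersenVertex → ℝ := fun a b => Sfun φ a b - Sfun φ b a with hg
  have hanti : ∀ a b, g b a = -g a b := by
    intro a b
    simp only [hg]
    ring
  have hS0 : ∀ a b, ¬petersen.Adj a b → Sfun φ a b = 0 := by
    intro a b hnadj
    apply Finset.sum_eq_zero
    intro e _
    rw [if_neg]
    rintro ⟨h1, h2⟩
    exact hnadj (h1 ▸ h2 ▸ out_adj e)
  have hsupp : ∀ a b, ¬petersen.Adj a b → g a b = 0 := by
    intro a b hnadj
    simp only [hg]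
    rw [hS0 a b hnadj, hS0 b a (fun h' => hnadj h'.symm), sub_zero]
  have hbd : ∀ a b, petersen.Adj a b → 1 ≤ |g a b| ∧ |g a b| ≤ r - 1 := by
    intro a b hadj
    have hab : a ≠ b := hadj.ne
    set e0 : PE := ⟨s(a,b), (petersen.mem_edgeSet).mpr hadj⟩ with he0
    have huniq : ∀ (x y : PetersenVertex) (e : PE), out1 e = x → out2 e = y →
        s(x, y) = s(a, b) → e = e0 := by
      intro x y e h1 h2 h3
      apply Subtype.ext
      show e.val = s(a,b)
      rw [← h3, ← h1, ← h2, out_mk e]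
    have hSab : Sfun φ a b = if out1 e0 = a ∧ out2 e0 = b then φ e0 else 0 := by
      apply Finset.sum_eq_single e0
      · intro e _ hne
        rw [if_neg]
        rintro ⟨h1, h2⟩
        exact hne (huniq a b e h1 h2 rfl)
      · intro habs
        exact absurd (Finset.mem_univ e0) habs
    have hSba : Sfun φ b a = if out1 e0 = b ∧ out2 e0 = a then φ e0 else 0 := by
      apply Finset.sum_eq_single e0
      · intro e _ hne
        rw [if_neg]
        rintro ⟨h1, h2⟩
        refine hne (huniq b a e h1 h2 ?_)
        rw [Sym2.eq_swap]
      · intro habs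
        exact absurd (Finset.mem_univ e0) habs
    have hcases : (out1 e0 = a ∧ out2 e0 = b) ∨ (out1 e0 = b ∧ out2 e0 = a) := by
      have h3 := out_mk e0
      rw [show e0.val = s(a,b) from rfl] at h3
      rcases Sym2.eq_iff.mp h3 with ⟨h4, h5⟩ | ⟨h4, h5⟩
      · exact Or.inl ⟨h4, h5⟩
      · exact Or.inr ⟨h4, h5⟩
    rcases hcases with ⟨h4, h5⟩ | ⟨h4, h5⟩
    · have hgab : g a b = φ e0 := by
        simp only [hg]
        rw [hSab, hSba, if_pos ⟨h4, h5⟩, if_neg, sub_zero]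
        rintro ⟨h6, _⟩
        exact hab (h4 ▸ h6 ▸ rfl)
      rw [hgab]
      exact hb e0
    · have hgab : g a b = -φ e0 := by
        simp only [hg]
        rw [hSab, hSba]
        rw [if_neg (by rintro ⟨h6, _⟩; exact hab (h6 ▸ h4 ▸ rfl))]
        rw [if_pos ⟨h4, h5⟩, zero_sub]
      rw [hgab, abs_neg]
      exact hb e0
  have hrow : ∀ a, ∑ b : PetersenVertex, g a b = 0 := by
    intro a
    simp only [hg]
    rw [Finset.sum_sub_distrib]
    have hSa : ∑ b : PetersenVertex, Sfun φ a b = ∑ e : PE, if out1 e = a then φ e else 0 := by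
      simp only [Sfun]
      rw [Finset.sum_comm]
      apply Finset.sum_congr rfl
      intro e _
      by_cases h1 : out1 e = a
      · simp only [h1, true_and]
        rw [Finset.sum_ite_eq (Finset.univ) (out2 e) (fun _ => φ e)]
        simp
      · simp [h1]
    have hSb : ∑ b : PetersenVertex, Sfun φ b a = ∑ e : PE, if out2 e = a then φ e else 0 := by
      simp only [Sfun]
      rw [Finset.sum_comm]
      apply Finset.sum_congr rfl
      intro e _
      by_cases h1 : out2 e = a
      · simp only [h1, and_true]
        rw [Finset.sum_ite_eq (Finset.univ) (out1 e) (fun _ => φ e)]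
        simp
      · simp [h1]
    rw [hSa, hSb, sub_eq_zero]
    have hca : (∑ᶠ e ∈ {e : PE | out1 e = a}, φ e) = ∑ᶠ e ∈ {e : PE | out2 e = a}, φ e := hc a
    rw [finsum_bridge φ (fun e => out1 e = a), finsum_bridge φ (fun e => out2 e = a)] at hca
    exact hca
  exact core_lemma r g hanti hsupp hbd hrow

end PetersenProof

theorem flowNumber_petersen : petersenMultigraph.flowNumber = ((5 : ℝ) : EReal) := by
  unfold Multigraph.flowNumber
  apply le_antisymm
  · exact sInf_le ⟨5, rfl, PetersenProof.upper⟩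
  · apply le_sInf
    rintro x ⟨r, rfl, φ, hφ⟩
    exact EReal.coe_le_coe_iff.mpr (PetersenProof.lower_bound r φ hφ)
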